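/- The evaluation map from N_inf(p) to the generalized Thompson group F(p), sending a word x_{i_1}^{ε_1} x_{i_2}^{ε_2} ⋯ x_{i_m}^{ε_m} to the corresponding product in F(p), is a bijection: every element g ∈ F(p) is represented by exactly one word of N_inf(p). -/

import Mathlib

def ThompsonRels (p : ℕ) : Set (FreeGroup ℕ) :=
  {r | ∃ i j : ℕ, i < j ∧
    r = FreeGroup.of j * FreeGroup.of i * (FreeGroup.of (j + p - 1))⁻¹ * (FreeGroup.of i)⁻¹}

abbrev FP (p : ℕ) := PresentedGroup (ThompsonRels p)

def xgen (p : ℕ) (i : ℕ) : FP p := PresentedGroup.of i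

def NInf (p : ℕ) (w : List (ℕ × Bool)) : Prop :=
  List.Chain' (fun a b : ℕ × Bool =>
    a.1 < b.1 ∨ (a.1 = b.1 ∧ a.2 = b.2) ∨
    (b.1 < a.1 ∧ a.1 - b.1 < p ∧ b.2 = false)) w

def evalWord (p : ℕ) (w : List (ℕ × Bool)) : FP p :=
  (w.map fun a => if a.2 then xgen p a.1 else (xgen p a.1)⁻¹).prod

namespace TNF

def Compat (p : ℕ) (a b : ℕ × Bool) : Prop :=
  a.1 < b.1 ∨ (a.1 = b.1 ∧ a.2 = b.2) ∨ (b.1 < a.1 ∧ a.1 - b.1 < p ∧ b.2 = false)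

instance (p : ℕ) (a b : ℕ × Bool) : Decidable (Compat p a b) := by
  unfold Compat; infer_instance

lemma nInf_iff (p w) : NInf p w ↔ List.Chain' (Compat p) w := Iff.rfl

def consL (p : ℕ) : ℕ × Bool → List (ℕ × Bool) → List (ℕ × Bool)
  | a, [] => [a]
  | a, b :: t =>
    if Compat p a b then a :: b :: t
    else if a.1 = b.1 then t
    else if b.2 = true then b :: consL p (a.1 + p - 1, a.2) t
    else b :: consL p (a.1 - (p - 1), a.2) t

lemma consL_nil (p a) : consL p a [] = [a] := rfl

lemma consL_pos (p) {a b : ℕ × Bool} (t) (h : Compat p a b) : consL p a (b :: t) = a :: b :: t := by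
  rw [consL, if_pos h]

lemma consL_cancel (p) {a b : ℕ × Bool} (t) (h1 : ¬ Compat p a b) (h2 : a.1 = b.1) :
    consL p a (b :: t) = t := by
  rw [consL, if_neg h1, if_pos h2]

lemma consL_push1 (p) {a b : ℕ × Bool} (t) (h1 : ¬ Compat p a b) (h2 : a.1 ≠ b.1)
    (h3 : b.2 = true) : consL p a (b :: t) = b :: consL p (a.1 + p - 1, a.2) t := by
  rw [consL, if_neg h1, if_neg h2, if_pos h3]

lemma consL_push2 (p) {a b : ℕ × Bool} (t) (h1 : ¬ Compat p a b) (h2 : a.1 ≠ b.1)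
    (h3 : b.2 = false) : consL p a (b :: t) = b :: consL p (a.1 - (p - 1), a.2) t := by
  rw [consL, if_neg h1, if_neg h2, if_neg (by simp [h3])]

lemma consL_of_head (p) {a : ℕ × Bool} {t : List (ℕ × Bool)}
    (h : ∀ b ∈ t.head?, Compat p a b) : consL p a t = a :: t := by
  cases t with
  | nil => rfl
  | cons b s => exact consL_pos p s (h b rfl)

end TNF
namespace TNF

/-- Head-control lemma: pushing a letter with large index into a normal word keeps the
head compatible with a preceding smaller letter. -/
lemma compat_head_consL (p : ℕ) {c : ℕ × Bool} {k : ℕ} {ε : Bool} {t : List (ℕ × Bool)}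
    (ht : List.Chain' (Compat p) t) (hc : ∀ b ∈ t.head?, Compat p c b)
    (hak : c.1 < k) (hα : c.2 = true → p ≤ k - c.1) :
    ∀ b ∈ (consL p (k, ε) t).head?, Compat p c b := by
  cases t with
  | nil =>
    intro b hb
    simp [consL_nil] at hb
    subst hb
    exact Or.inl hak
  | cons b0 s =>
    by_cases h1 : Compat p (k, ε) b0
    · rw [consL_pos p s h1]
      intro b hb
      simp at hb; subst hb
      exact Or.inl hak
    · by_cases h2 : k = b0.1
      · rw [consL_cancel p s h1 h2]
        cases s with
        | nil => intro b hb; simp at hb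
        | cons b1 s' =>
          intro b hb
          simp at hb; subst hb
          have hch : Compat p b0 b1 := (List.isChain_cons_cons.mp ht).1
          have hcb0 : Compat p c b0 := hc b0 rfl
          -- case analysis
          rcases hch with h | h | h
          · exact Or.inl (lt_trans (by omega : c.1 < b0.1) h)
          · exact Or.inl (by omega : c.1 < b1.1)
          · -- b1.1 < b0.1 = k, b0.1 - b1.1 < p, b1.2 = false
            obtain ⟨hlt, hsub, hfb⟩ := h
            rcases Nat.lt_trichotomy c.1 b1.1 with h' | h' | h'
            · exact Or.inl h'
            · refine Or.inr (Or.inl ⟨h', ?_⟩)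
              cases hc2 : c.2 with
              | false => rw [hfb]
              | true => exfalso; have := hα hc2; omega
            · exact Or.inr (Or.inr ⟨h', by omega, hfb⟩)
      · by_cases h3 : b0.2 = true
        · rw [consL_push1 p s h1 h2 h3]
          intro b hb; simp at hb; subst hb
          exact hc b0 rfl
        · rw [consL_push2 p s h1 h2 (by simpa using h3)]
          intro b hb; simp at hb; subst hb
          exact hc b0 rfl

lemma chain'_consL (p : ℕ) (hp : 1 ≤ p) (a : ℕ × Bool) (w : List (ℕ × Bool))
    (hw : List.Chain' (Compat p) w) : List.Chain' (Compat p) (consL p a w) := by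
  induction w generalizing a with
  | nil => simp [consL_nil]; exact List.isChain_singleton _
  | cons b t ih =>
    obtain ⟨i, ε⟩ := a
    by_cases h1 : Compat p (i, ε) b
    · rw [consL_pos p t h1]
      exact List.isChain_cons_cons.mpr ⟨h1, hw⟩
    · by_cases h2 : i = b.1
      · rw [consL_cancel p t h1 h2]
        exact hw.tail
      · have hbi : b.1 < i := by
          rcases Nat.lt_trichotomy i b.1 with h | h | h
          · exact absurd (Or.inl h) h1
          · exact absurd h h2
          · exact h
        by_cases h3 : b.2 = true
        · rw [consL_push1 p t h1 (by simpa using h2) h3]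
          refine List.isChain_cons.mpr ⟨?_, ih _ hw.tail⟩
          refine compat_head_consL p hw.tail ?_ (by omega) (by rw [h3]; intro _; omega)
          intro y hy
          exact (List.isChain_cons.mp hw).1 y hy
        · have h3' : b.2 = false := by simpa using h3
          have hsub : p ≤ i - b.1 := by
            by_contra hcon
            exact h1 (Or.inr (Or.inr ⟨hbi, by omega, h3'⟩))
          rw [consL_push2 p t h1 (by simpa using h2) h3']
          refine List.isChain_cons.mpr ⟨?_, ih _ hw.tail⟩
          refine compat_head_consL p hw.tail ?_ (by omega) (by rw [h3']; simp)
          intro y hy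
          exact (List.isChain_cons.mp hw).1 y hy

end TNF
namespace TNF

lemma rel1 (p : ℕ) {i j : ℕ} (h : i < j) :
    xgen p j * xgen p i = xgen p i * xgen p (j + p - 1) := by
  have hmem : (FreeGroup.of j * FreeGroup.of i * (FreeGroup.of (j + p - 1))⁻¹ *
      (FreeGroup.of i)⁻¹ : FreeGroup ℕ) ∈ ThompsonRels p := ⟨i, j, h, rfl⟩
  have h1 : (PresentedGroup.mk (ThompsonRels p)
      (FreeGroup.of j * FreeGroup.of i * (FreeGroup.of (j + p - 1))⁻¹ * (FreeGroup.of i)⁻¹)) =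
      1 := by
    have : (FreeGroup.of j * FreeGroup.of i * (FreeGroup.of (j + p - 1))⁻¹ *
        (FreeGroup.of i)⁻¹ : FreeGroup ℕ) ∈ Subgroup.normalClosure (ThompsonRels p) :=
      Subgroup.subset_normalClosure hmem
    exact (QuotientGroup.eq_one_iff _).mpr this
  simp only [map_mul, map_inv] at h1
  have h2 : xgen p j * xgen p i * (xgen p (j + p - 1))⁻¹ * (xgen p i)⁻¹ = 1 := h1
  calc xgen p j * xgen p i
      = (xgen p j * xgen p i * (xgen p (j + p - 1))⁻¹ * (xgen p i)⁻¹) *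
        (xgen p i * xgen p (j + p - 1)) := by group
    _ = xgen p i * xgen p (j + p - 1) := by rw [h2]; group

/-- evaluation of one letter -/
def evL (p : ℕ) (a : ℕ × Bool) : FP p := if a.2 = true then xgen p a.1 else (xgen p a.1)⁻¹

lemma evalWord_nil (p : ℕ) : evalWord p [] = 1 := rfl

lemma evalWord_cons (p : ℕ) (a w) : evalWord p (a :: w) = evL p a * evalWord p w := by
  simp [evalWord, evL]

lemma evalWord_append (p : ℕ) (l1 l2) :
    evalWord p (l1 ++ l2) = evalWord p l1 * evalWord p l2 := by
  simp [evalWord]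

lemma relA (p : ℕ) {j i : ℕ} (h : j < i) (ε : Bool) :
    evL p (i, ε) * xgen p j = xgen p j * evL p (i + p - 1, ε) := by
  have base : xgen p i * xgen p j = xgen p j * xgen p (i + p - 1) := rel1 p h
  cases ε with
  | true => simpa [evL] using base
  | false =>
    simp only [evL, Bool.false_eq_true, if_false]
    have key : xgen p j = xgen p i * xgen p j * (xgen p (i + p - 1))⁻¹ := by
      rw [base]; group
    calc (xgen p i)⁻¹ * xgen p j
        = (xgen p i)⁻¹ * (xgen p i * xgen p j * (xgen p (i + p - 1))⁻¹) := by rw [← key]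
      _ = xgen p j * (xgen p (i + p - 1))⁻¹ := by group

lemma relB (p : ℕ) (hp : 1 ≤ p) {j i : ℕ} (hlt : j < i) (hge : p ≤ i - j) (ε : Bool) :
    evL p (i, ε) * (xgen p j)⁻¹ = (xgen p j)⁻¹ * evL p (i - (p - 1), ε) := by
  have hk : j < i - (p - 1) := by omega
  have hkk : (i - (p - 1)) + p - 1 = i := by omega
  have base : xgen p (i - (p - 1)) * xgen p j = xgen p j * xgen p i := by
    have := rel1 p hk
    rwa [hkk] at this
  cases ε with
  | true =>
    simp only [evL, if_true]
    have key : xgen p i = (xgen p j)⁻¹ * xgen p (i - (p - 1)) * xgen p j := by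
      rw [mul_assoc, base]; group
    calc xgen p i * (xgen p j)⁻¹
        = ((xgen p j)⁻¹ * xgen p (i - (p - 1)) * xgen p j) * (xgen p j)⁻¹ := by rw [← key]
      _ = (xgen p j)⁻¹ * xgen p (i - (p - 1)) := by group
  | false =>
    simp only [evL, Bool.false_eq_true, if_false]
    have key : (xgen p i)⁻¹ = (xgen p j)⁻¹ * (xgen p (i - (p - 1)))⁻¹ * xgen p j := by
      rw [← mul_inv_rev, base]
      group
    calc (xgen p i)⁻¹ * (xgen p j)⁻¹
        = ((xgen p j)⁻¹ * (xgen p (i - (p - 1)))⁻¹ * xgen p j) * (xgen p j)⁻¹ := by rw [← key]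
      _ = (xgen p j)⁻¹ * (xgen p (i - (p - 1)))⁻¹ := by group

lemma eval_consL (p : ℕ) (hp : 1 ≤ p) (a : ℕ × Bool) (w : List (ℕ × Bool)) :
    evalWord p (consL p a w) = evL p a * evalWord p w := by
  induction w generalizing a with
  | nil => simp [consL_nil, evalWord_cons, evalWord_nil]
  | cons b t ih =>
    obtain ⟨i, ε⟩ := a
    by_cases h1 : Compat p (i, ε) b
    · rw [consL_pos p t h1, evalWord_cons]
    · by_cases h2 : i = b.1
      · rw [consL_cancel p t h1 h2]
        have hsign : b.2 ≠ ε := by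
          intro hs; exact h1 (Or.inr (Or.inl ⟨h2, hs.symm⟩))
        rw [evalWord_cons]
        have : evL p (i, ε) * evL p b = 1 := by
          cases hε : ε with
          | true =>
            have hb2 : b.2 = false := by cases hb : b.2 <;> simp_all
            simp [evL, hb2, h2]
          | false =>
            have hb2 : b.2 = true := by cases hb : b.2 <;> simp_all
            simp [evL, hb2, h2]
        rw [← mul_assoc, this, one_mul]
      · have hbi : b.1 < i := by
          rcases Nat.lt_trichotomy i b.1 with h | h | h
          · exact absurd (Or.inl h) h1
          · exact absurd h h2
          · exact h
        by_cases h3 : b.2 = true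
        · rw [consL_push1 p t h1 h2 h3, evalWord_cons, ih, evalWord_cons]
          have hb : evL p b = xgen p b.1 := by simp [evL, h3]
          rw [hb, ← mul_assoc, ← mul_assoc, ← relA p hbi ε]
        · have h3' : b.2 = false := by simpa using h3
          have hsub : p ≤ i - b.1 := by
            by_contra hcon
            exact h1 (Or.inr (Or.inr ⟨hbi, by omega, h3'⟩))
          rw [consL_push2 p t h1 h2 h3', evalWord_cons, ih, evalWord_cons]
          have hb : evL p b = (xgen p b.1)⁻¹ := by simp [evL, h3']
          rw [hb, ← mul_assoc, ← mul_assoc, ← relB p hp hbi hsub ε]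

end TNF
namespace TNF

lemma not_compat_self (p : ℕ) (i : ℕ) (ε : Bool) : ¬ Compat p (i, !ε) (i, ε) := by
  rintro (h | h | h)
  · simp at h
  · simp at h
  · simp at h

lemma consL_inv (p : ℕ) (i : ℕ) (ε : Bool) (w : List (ℕ × Bool))
    (hw : List.Chain' (Compat p) w) :
    consL p (i, !ε) (consL p (i, ε) w) = w := by
  induction w generalizing i ε with
  | nil =>
    rw [consL_nil, consL_cancel p [] (not_compat_self p i ε) rfl]
  | cons b t ih =>
    by_cases h1 : Compat p (i, ε) b
    · rw [consL_pos p t h1, consL_cancel p (b :: t) (not_compat_self p i ε) rfl]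
    · by_cases h2 : i = b.1
      · rw [consL_cancel p t h1 h2]
        have hsign : b.2 = !ε := by
          have : ¬ b.2 = ε := fun hs => h1 (Or.inr (Or.inl ⟨h2, hs.symm⟩))
          cases hb : b.2 <;> cases hε : ε <;> simp_all
        have hb : b = (i, !ε) := by
          ext
          · exact h2.symm
          · rw [hsign]
        rw [consL_of_head p ?_, ← hb]
        intro y hy
        have := (List.isChain_cons.mp hw).1 y hy
        rwa [hb] at this
      · have hbi : b.1 < i := by
          rcases Nat.lt_trichotomy i b.1 with h | h | h
          · exact absurd (Or.inl h) h1
          · exact absurd h h2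
          · exact h
        by_cases h3 : b.2 = true
        · rw [consL_push1 p t h1 h2 h3]
          have hnc : ¬ Compat p (i, !ε) b := by
            rintro (h | h | h)
            · omega
            · exact h2 h.1
            · rw [h3] at h; simp at h
          rw [consL_push1 p _ hnc h2 h3]
          simp only
          rw [ih _ _ hw.tail]
        · have h3' : b.2 = false := by simpa using h3
          have hsub : p ≤ i - b.1 := by
            by_contra hcon
            exact h1 (Or.inr (Or.inr ⟨hbi, by omega, h3'⟩))
          rw [consL_push2 p t h1 h2 h3']
          have hnc : ¬ Compat p (i, !ε) b := by
            rintro (h | h | h)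
            · omega
            · exact h2 h.1
            · omega
          rw [consL_push2 p _ hnc h2 h3']
          simp only
          rw [ih _ _ hw.tail]

end TNF
namespace TNF

lemma consL_push1' (p : ℕ) {i m : ℕ} {εi δ : Bool} (t : List (ℕ × Bool))
    (h1 : ¬ Compat p (i, εi) (m, δ)) (h2 : i ≠ m) (h3 : δ = true) :
    consL p (i, εi) ((m, δ) :: t) = (m, δ) :: consL p (i + p - 1, εi) t :=
  consL_push1 p t h1 h2 h3

lemma consL_push2' (p : ℕ) {i m : ℕ} {εi δ : Bool} (t : List (ℕ × Bool))
    (h1 : ¬ Compat p (i, εi) (m, δ)) (h2 : i ≠ m) (h3 : δ = false) :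
    consL p (i, εi) ((m, δ) :: t) = (m, δ) :: consL p (i - (p - 1), εi) t :=
  consL_push2 p t h1 h2 h3

lemma compat_lt (p : ℕ) {a b : ℕ} {εa εb : Bool} (h : a < b) : Compat p (a, εa) (b, εb) :=
  Or.inl h

lemma compat_eqT (p : ℕ) {a : ℕ} {εa : Bool} : Compat p (a, εa) (a, εa) :=
  Or.inr (Or.inl ⟨rfl, rfl⟩)

lemma compat_low (p : ℕ) {a b : ℕ} {εa : Bool} (h1 : b < a) (h2 : a - b < p) :
    Compat p (a, εa) (b, false) := Or.inr (Or.inr ⟨h1, h2, rfl⟩)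

lemma not_compat_TT (p : ℕ) {a b : ℕ} (h : b < a) : ¬ Compat p (a, true) (b, true) := by
  rintro (h' | ⟨h', -⟩ | ⟨-, -, h'⟩)
  · omega
  · omega
  · simp at h'

lemma not_compat_TF (p : ℕ) (i : ℕ) : ¬ Compat p (i, true) (i, false) := by
  rintro (h' | ⟨-, h'⟩ | ⟨h', -, -⟩)
  · omega
  · simp at h'
  · omega

lemma not_compat_far (p : ℕ) {a b : ℕ} (h : b < a) (hge : p ≤ a - b) (δ : Bool) :
    ¬ Compat p (a, true) (b, δ) := by
  rintro (h' | ⟨h', -⟩ | ⟨-, h', -⟩)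
  · omega
  · omega
  · omega

lemma braid (p : ℕ) (hp : 1 ≤ p) :
    ∀ (w : List (ℕ × Bool)), List.Chain' (Compat p) w → ∀ (i j : ℕ), i < j →
      consL p (j, true) (consL p (i, true) w) =
      consL p (i, true) (consL p (j + p - 1, true) w) := by
  intro w
  induction w with
  | nil =>
    intro _ i j hij
    rw [consL_nil, consL_nil, consL_push1' p [] (not_compat_TT p hij) (by omega) rfl,
      consL_nil, consL_pos p [] (compat_lt p (by omega))]
  | cons b t ih =>
    intro hw i j hij
    obtain ⟨m, δ⟩ := b
    have hw' : List.Chain' (Compat p) t := hw.tail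
    rcases Nat.lt_trichotomy i m with him | him | him
    · -- Case 1 : i < m
      rw [consL_pos p t (compat_lt p him),
        consL_push1' p _ (not_compat_TT p hij) (by omega) rfl,
        consL_of_head p (compat_head_consL p hw
          (by intro y hy; simp at hy; subst hy; exact compat_lt p him)
          (by omega) (fun _ => by omega))]
    · -- i = m
      subst him
      by_cases hδ : δ = true
      · -- Case 2
        subst hδ
        rw [consL_pos p t (compat_eqT p),
          consL_push1' p _ (not_compat_TT p hij) (by omega) rfl,
          consL_push1' p t (not_compat_TT p (by omega)) (by omega) rfl,
          consL_pos p _ (compat_eqT p)]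
      · -- Case 4
        have hδ' : δ = false := by simpa using hδ
        subst hδ'
        rw [consL_cancel p t (not_compat_TF p i) rfl,
          consL_push2' p t (not_compat_far p (by omega) (by omega) false) (by omega) rfl]
        have harith : j + p - 1 - (p - 1) = j := by omega
        rw [harith, consL_cancel p _ (not_compat_TF p i) rfl]
    · -- m < i
      by_cases hδ : δ = true
      · -- Case 5
        subst hδ
        rw [consL_push1' p t (not_compat_TT p him) (by omega) rfl,
          consL_push1' p _ (not_compat_TT p (by omega : m < j)) (by omega) rfl,
          consL_push1' p t (not_compat_TT p (by omega : m < j + p - 1)) (by omega) rfl,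
          consL_push1' p _ (not_compat_TT p him) (by omega) rfl,
          ih hw' (i + p - 1) (j + p - 1) (by omega)]
      · have hδ' : δ = false := by simpa using hδ
        subst hδ'
        by_cases hfar : i - m < p
        · -- Case 3
          rw [consL_pos p t (compat_low p him hfar),
            consL_push1' p _ (not_compat_TT p hij) (by omega) rfl,
            consL_push2' p t (not_compat_far p (by omega) (by omega) false) (by omega) rfl]
          have harith : j + p - 1 - (p - 1) = j := by omega
          rw [harith, consL_pos p _ (compat_low p him hfar)]
        · -- Case 6
          have hge : p ≤ i - m := by omega
          rw [consL_push2' p t (not_compat_far p him hge false) (by omega) rfl,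
            consL_push2' p _ (not_compat_far p (by omega : m < j) (by omega) false)
              (by omega) rfl,
            consL_push2' p t (not_compat_far p (by omega : m < j + p - 1) (by omega) false)
              (by omega) rfl]
          have harith : j + p - 1 - (p - 1) = j := by omega
          rw [harith,
            consL_push2' p _ (not_compat_far p him hge false) (by omega) rfl]
          have h2 := ih hw' (i - (p - 1)) (j - (p - 1)) (by omega)
          have harith2 : j - (p - 1) + p - 1 = j := by omega
          rw [harith2] at h2
          rw [h2]

end TNF
namespace TNF

variable {p : ℕ}

/-- Normal words. -/
abbrev NW (p : ℕ) := {w : List (ℕ × Bool) // NInf p w}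

/-- The permutation of normal words given by left multiplication by `x_i`. -/
def σ (hp : 1 ≤ p) (i : ℕ) : Equiv.Perm (NW p) where
  toFun w := ⟨consL p (i, true) w.1, chain'_consL p hp _ _ w.2⟩
  invFun w := ⟨consL p (i, false) w.1, chain'_consL p hp _ _ w.2⟩
  left_inv w := by
    apply Subtype.ext
    have := consL_inv p i true w.1 w.2
    simpa using this
  right_inv w := by
    apply Subtype.ext
    have := consL_inv p i false w.1 w.2
    simpa using this

lemma σ_mul_σ (hp : 1 ≤ p) {i j : ℕ} (hij : i < j) :
    σ (p := p) hp j * σ hp i = σ hp i * σ hp (j + p - 1) := by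
  apply Equiv.ext
  intro w
  simp only [Equiv.Perm.mul_apply]
  refine Subtype.ext ?_
  show consL p (j, true) (consL p (i, true) w.1) = consL p (i, true) (consL p (j + p - 1, true) w.1)
  exact braid p hp w.1 w.2 i j hij

/-- The action of `F(p)` on normal words. -/
def act (hp : 1 ≤ p) : FP p →* Equiv.Perm (NW p) :=
  PresentedGroup.toGroup (f := fun i => σ (p := p) hp i) (by
    rintro r ⟨i, j, hij, rfl⟩
    simp only [map_mul, map_inv, FreeGroup.lift_apply_of]
    have h := σ_mul_σ (p := p) hp hij
    rw [mul_assoc, mul_assoc]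
    rw [← mul_assoc (σ hp i) _ _]
    calc σ (p := p) hp j * (σ hp i * (σ hp (j + p - 1))⁻¹ * (σ hp i)⁻¹)
        = σ hp j * σ hp i * (σ hp (j + p - 1))⁻¹ * (σ hp i)⁻¹ := by group
      _ = σ hp i * σ hp (j + p - 1) * (σ hp (j + p - 1))⁻¹ * (σ hp i)⁻¹ := by rw [h]
      _ = 1 := by group)

lemma act_xgen (hp : 1 ≤ p) (i : ℕ) : act hp (xgen p i) = σ (p := p) hp i :=
  PresentedGroup.toGroup.of _

lemma nilNInf : NInf p [] := List.isChain_nil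

lemma act_eval (hp : 1 ≤ p) (w : List (ℕ × Bool)) (hw : NInf p w) :
    act hp (evalWord p w) ⟨[], nilNInf⟩ = ⟨w, hw⟩ := by
  induction w with
  | nil => simp [evalWord_nil]
  | cons a w ih =>
    have hw' : NInf p w := hw.tail
    rw [evalWord_cons, map_mul]
    have hhd : ∀ y ∈ w.head?, Compat p a y := (List.isChain_cons.mp hw).1
    have hcons : consL p a w = a :: w := consL_of_head p hhd
    obtain ⟨i, ε⟩ := a
    cases ε with
    | true =>
      have : evL p (i, true) = xgen p i := by simp [evL]
      rw [Equiv.Perm.mul_apply, ih hw', this, act_xgen hp]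
      apply Subtype.ext
      exact hcons
    | false =>
      have : evL p (i, false) = (xgen p i)⁻¹ := by simp [evL]
      rw [Equiv.Perm.mul_apply, ih hw', this, map_inv, act_xgen hp]
      apply Subtype.ext
      exact hcons

lemma exists_list (g : FP p) : ∃ l : List (ℕ × Bool), evalWord p l = g := by
  obtain ⟨r, rfl⟩ := PresentedGroup.mk_surjective (ThompsonRels p) g
  induction r using FreeGroup.induction_on with
  | C1 => exact ⟨[], by simp [evalWord_nil]⟩
  | of x => exact ⟨[(x, true)], by simp [evalWord_cons, evalWord_nil, evL, xgen]; rfl⟩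
  | inv_of x _ =>
    exact ⟨[(x, false)], by
      simp only [evalWord_cons, evalWord_nil, mul_one, map_inv]
      show evL p (x, false) = _
      simp [evL, xgen]
      rfl⟩
  | mul x y hx hy =>
    obtain ⟨l1, h1⟩ := hx
    obtain ⟨l2, h2⟩ := hy
    exact ⟨l1 ++ l2, by rw [evalWord_append, h1, h2, map_mul]⟩

lemma foldr_consL (hp : 1 ≤ p) (l : List (ℕ × Bool)) :
    NInf p (l.foldr (consL p) []) ∧
      evalWord p (l.foldr (consL p) []) = evalWord p l := by
  induction l with
  | nil => exact ⟨nilNInf, rfl⟩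
  | cons a l ih =>
    refine ⟨chain'_consL p hp _ _ ih.1, ?_⟩
    rw [List.foldr_cons, eval_consL p hp, ih.2, evalWord_cons]

end TNF

theorem stmt3 (p : ℕ) (hp : 2 ≤ p) :
    Function.Bijective
      (fun w : {w : List (ℕ × Bool) // NInf p w} => evalWord p w.1) := by
  have hp1 : 1 ≤ p := by omega
  constructor
  · intro w1 w2 h
    have h1 := TNF.act_eval hp1 w1.1 w1.2
    have h2 := TNF.act_eval hp1 w2.1 w2.2
    simp only at h
    rw [h, h2] at h1
    exact Subtype.ext (congrArg Subtype.val h1).symm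
  · intro g
    obtain ⟨l, hl⟩ := TNF.exists_list g
    obtain ⟨hn, he⟩ := TNF.foldr_consL hp1 l
    exact ⟨⟨l.foldr (TNF.consL p) [], hn⟩, by simpa [he] using hl⟩
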